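/- Let A ∈ ℝ^{m×n}, q < m/2, and let U be the orthogonal projection onto R = ⋂_{T ⊆ [m], |T| = m−2q} rowspan(A_T). For every (A,q)-robust function G : ℝ^n → Z and every x* ∈ ℝ^n, the set {x ∈ ℝ^n : G(x) = G(x*)} contains the affine subspace x* + ker(U). -/

import Mathlib

open Matrix Finset

noncomputable section

/-- ℓ₀ "norm": the number of nonzero coordinates. -/
def l0 {m : ℕ} (w : Fin m → ℝ) : ℕ := (Finset.univ.filter fun i => w i ≠ 0).card

/-- The row span of the submatrix `A_T` (rows of `A` indexed by `T`), viewed inside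
Euclidean space. -/
def rowspanE {m n : ℕ} (A : Matrix (Fin m) (Fin n) ℝ) (T : Finset (Fin m)) :
    Submodule ℝ (EuclideanSpace ℝ (Fin n)) :=
  Submodule.span ℝ {w : EuclideanSpace ℝ (Fin n) | ∃ i ∈ T, w = A i}

/-- The range (column space) of a square matrix, viewed inside Euclidean space. -/
def rangeE {n : ℕ} (M : Matrix (Fin n) (Fin n) ℝ) : Submodule ℝ (EuclideanSpace ℝ (Fin n)) where
  carrier := {x | ∃ v : EuclideanSpace ℝ (Fin n), M.mulVec v = x}
  zero_mem' := ⟨0, Matrix.mulVec_zero M⟩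
  add_mem' := by
    rintro a b ⟨va, ha⟩ ⟨vb, hb⟩
    exact ⟨va + vb, by simp [Matrix.mulVec_add, ha, hb]⟩
  smul_mem' := by
    rintro c a ⟨v, hv⟩
    exact ⟨c • v, by simp [Matrix.mulVec_smul, hv]⟩


lemma inner_eq_dot {n : ℕ} (x y : EuclideanSpace ℝ (Fin n)) :
    (inner ℝ x y : ℝ) = x ⬝ᵥ y := by
  simp [PiLp.inner_apply, dotProduct, RCLike.inner_apply, mul_comm]

lemma onestep {m n : ℕ} {Z : Type*} (A : Matrix (Fin m) (Fin n) ℝ) (q : ℕ) (hq : 2 * q < m)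
    (G : (Fin n → ℝ) → Z)
    (hG : ∀ (x₁ x₂ : Fin n → ℝ) (e₁ e₂ : Fin m → ℝ), l0 e₁ ≤ q → l0 e₂ ≤ q →
        A.mulVec x₁ + e₁ = A.mulVec x₂ + e₂ → G x₁ = G x₂)
    (T : Finset (Fin m)) (hT : T.card = m - 2 * q)
    (w : Fin n → ℝ) (hw : ∀ i ∈ T, A.mulVec w i = 0) (x : Fin n → ℝ) :
    G (x + w) = G x := by
  have hTc : Tᶜ.card = 2 * q := by
    have := Finset.card_compl T
    simp [Fintype.card_fin] at this
    omega
  obtain ⟨S₁, hS₁sub, hS₁card⟩ := Finset.exists_subset_card_eq (s := Tᶜ) (n := q) (by omega)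
  set e₂ : Fin m → ℝ := fun i => if i ∈ S₁ then A.mulVec w i else 0 with he₂
  set e₁ : Fin m → ℝ := fun i => if i ∈ Tᶜ \ S₁ then -(A.mulVec w i) else 0 with he₁
  apply hG (x + w) x e₁ e₂
  · calc l0 e₁ ≤ (Tᶜ \ S₁).card := by
          apply Finset.card_le_card
          intro i hi
          simp only [l0, Finset.mem_filter, he₁] at hi
          by_contra h
          simp [h] at hi
        _ ≤ q := by
          rw [Finset.card_sdiff_of_subset hS₁sub]
          omega
  · calc l0 e₂ ≤ S₁.card := by
          apply Finset.card_le_card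
          intro i hi
          simp only [l0, Finset.mem_filter, he₂] at hi
          by_contra h
          simp [h] at hi
        _ ≤ q := le_of_eq hS₁card
  · funext i
    simp only [Pi.add_apply, Matrix.mulVec_add, he₁, he₂]
    by_cases hiT : i ∈ T
    · have h1 : i ∉ S₁ := fun h => (Finset.mem_compl.mp (hS₁sub h)) hiT
      have h2 : i ∉ Tᶜ \ S₁ := fun h => (Finset.mem_compl.mp (Finset.mem_sdiff.mp h).1) hiT
      simp [h1, h2, hw i hiT]
    · by_cases hiS : i ∈ S₁
      · have : i ∉ Tᶜ \ S₁ := fun h => (Finset.mem_sdiff.mp h).2 hiS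
        simp [hiS, this]
      · have : i ∈ Tᶜ \ S₁ := Finset.mem_sdiff.mpr ⟨Finset.mem_compl.mpr hiT, hiS⟩
        simp [hiS, this]

theorem stmt8 {m n : ℕ} {Z : Type*} (A : Matrix (Fin m) (Fin n) ℝ) (q : ℕ) (hq : 2 * q < m)
    (U : Matrix (Fin n) (Fin n) ℝ) (hUsymm : U.IsSymm) (hUidem : U * U = U)
    (hUrange : rangeE U = ⨅ T ∈ {T : Finset (Fin m) | T.card = m - 2 * q}, rowspanE A T)
    (G : (Fin n → ℝ) → Z)
    (hG : ∀ (x₁ x₂ : Fin n → ℝ) (e₁ e₂ : Fin m → ℝ), l0 e₁ ≤ q → l0 e₂ ≤ q →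
        A.mulVec x₁ + e₁ = A.mulVec x₂ + e₂ → G x₁ = G x₂)
    (xs : Fin n → ℝ) :
    {x : Fin n → ℝ | ∃ v : Fin n → ℝ, U.mulVec v = 0 ∧ x = xs + v} ⊆
      {x : Fin n → ℝ | G x = G xs} := by
  rintro x ⟨v, hv, rfl⟩
  show G (xs + v) = G xs
  -- v is orthogonal to the range of U
  have hvperp : (WithLp.toLp 2 v : EuclideanSpace ℝ (Fin n)) ∈ (rangeE U)ᗮ := by
    rw [Submodule.mem_orthogonal]
    rintro u ⟨w, hw⟩
    rw [inner_eq_dot, ← hw, WithLp.ofLp_toLp]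
    calc (U.mulVec w) ⬝ᵥ v = v ⬝ᵥ (U.mulVec w) := dotProduct_comm _ _
      _ = (U.vecMul v) ⬝ᵥ w := Matrix.dotProduct_mulVec _ _ _
      _ = (Uᵀ.mulVec v) ⬝ᵥ w := by rw [Matrix.mulVec_transpose]
      _ = (0 : Fin n → ℝ) ⬝ᵥ w := by rw [hUsymm.eq, hv]
      _ = 0 := zero_dotProduct _
  -- duality
  set K : {T : Finset (Fin m) // T.card = m - 2 * q} → Submodule ℝ (EuclideanSpace ℝ (Fin n)) :=
    fun T => rowspanE A T.1 with hK
  have hinf : (⨅ T ∈ {T : Finset (Fin m) | T.card = m - 2 * q}, rowspanE A T) = ⨅ i, K i := by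
    rw [iInf_subtype]
    rfl
  have hKdd : ∀ i, ((K i)ᗮ)ᗮ = K i := fun i => Submodule.orthogonal_orthogonal _
  have hdual : (rangeE U)ᗮ = ⨆ i, (K i)ᗮ := by
    rw [hUrange, hinf]
    rw [show (⨅ i, K i) = (⨆ i, (K i)ᗮ)ᗮ from by
      rw [← Submodule.iInf_orthogonal]
      exact iInf_congr fun i => (hKdd i).symm]
    exact Submodule.orthogonal_orthogonal _
  rw [hdual] at hvperp
  -- induction over the supremum
  have main : ∀ y ∈ ⨆ i, (K i)ᗮ, ∀ x : Fin n → ℝ, G (x + y.ofLp) = G x := by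
    intro y hy
    refine Submodule.iSup_induction (motive := fun y => ∀ x : Fin n → ℝ, G (x + y.ofLp) = G x)
      _ hy ?_ ?_ ?_
    · rintro ⟨T, hT⟩ w hw x
      refine onestep A q hq G hG T hT w.ofLp ?_ x
      intro i hi
      have hAi : (WithLp.toLp 2 (A i) : EuclideanSpace ℝ (Fin n)) ∈ K ⟨T, hT⟩ :=
        Submodule.subset_span ⟨i, hi, rfl⟩
      have := Submodule.inner_right_of_mem_orthogonal hAi hw
      rw [inner_eq_dot] at this
      simpa [Matrix.mulVec] using this
    · intro x; simp
    · intro a b ha hb x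
      calc G (x + (a + b).ofLp) = G ((x + a.ofLp) + b.ofLp) := by rw [WithLp.ofLp_add, add_assoc]
        _ = G (x + a) := hb _
        _ = G x := ha _
  exact main (WithLp.toLp 2 v) hvperp xs
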